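/- Let m ≥ 2 and k ≥ 1, and consider a deck of m^k cards. The out m-shuffle O_m (the out m-shuffle for m stacks of n = m^{k−1} cards) acts on base-m indices as a left cyclic shift of the digit tuple: it sends the card with base-m index (x_1, x_2, …, x_k) to the position with base-m index (x_2, x_3, …, x_k, x_1). -/

import Mathlib

lemma digits_sum_lt (m : ℕ) (hm : 1 ≤ m) :
    ∀ (n : ℕ) (x : Fin n → ℕ), (∀ t, x t < m) →
      (∑ t : Fin n, x t * m ^ (n - 1 - (t : ℕ))) < m ^ n := by
  intro n
  induction n with
  | zero => intro x hx; simp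
  | succ n ih =>
    intro x hx
    rw [Fin.sum_univ_succ]
    have hS : (∑ t : Fin n, x t.succ * m ^ ((n + 1) - 1 - ((t.succ : Fin (n+1)) : ℕ)))
        = ∑ t : Fin n, (x ∘ Fin.succ) t * m ^ (n - 1 - (t : ℕ)) := by
      refine Finset.sum_congr rfl fun j _ => ?_
      have hj : (j : ℕ) < n := j.isLt
      have : (n + 1) - 1 - ((j.succ : Fin (n+1)) : ℕ) = n - 1 - (j : ℕ) := by
        simp [Fin.val_succ]; omega
      rw [this]; rfl
    rw [hS]
    have h1 := ih (x ∘ Fin.succ) (fun t => hx t.succ)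
    have h0 : x 0 < m := hx 0
    have hsimp : (n + 1) - 1 - ((0 : Fin (n+1)) : ℕ) = n := by simp
    rw [hsimp]
    calc x 0 * m ^ n + (∑ t : Fin n, (x ∘ Fin.succ) t * m ^ (n - 1 - (t : ℕ)))
        < x 0 * m ^ n + m ^ n := by omega
      _ = (x 0 + 1) * m ^ n := by ring
      _ ≤ m * m ^ n := Nat.mul_le_mul_right _ (by omega)
      _ = m ^ (n + 1) := by ring

theorem out_shuffle_digit_action (m k : ℕ) (hm : 2 ≤ m) (hk : 1 ≤ k)
    (O : Equiv.Perm (Fin (m ^ k)))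
    (hO : ∀ i : Fin (m ^ k),
      (O i : ℕ) = m * ((i : ℕ) % m ^ (k - 1)) + (i : ℕ) / m ^ (k - 1)) :
    ∀ x : Fin k → ℕ, (∀ t, x t < m) →
      ∀ i : Fin (m ^ k), (i : ℕ) = ∑ t : Fin k, x t * m ^ (k - 1 - (t : ℕ)) →
        (O i : ℕ) = ∑ t : Fin k,
          x ⟨((t : ℕ) + 1) % k, Nat.mod_lt _ (by omega)⟩ * m ^ (k - 1 - (t : ℕ)) := by
  obtain ⟨n, rfl⟩ : ∃ n, k = n + 1 := ⟨k - 1, by omega⟩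
  intro x hx i hi
  set r : ℕ := ∑ j : Fin n, x j.succ * m ^ (n - 1 - (j : ℕ)) with hr_def
  have hr : r < m ^ n := digits_sum_lt m (by omega) n (fun j => x j.succ) (fun j => hx j.succ)
  have hi' : (i : ℕ) = m ^ n * x 0 + r := by
    rw [hi, Fin.sum_univ_succ]
    have h0 : x 0 * m ^ ((n + 1) - 1 - ((0 : Fin (n+1)) : ℕ)) = m ^ n * x 0 := by
      simp [Nat.mul_comm]
    have h1 : (∑ j : Fin n, x j.succ * m ^ ((n + 1) - 1 - ((j.succ : Fin (n+1)) : ℕ))) = r := by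
      rw [hr_def]
      refine Finset.sum_congr rfl fun j _ => ?_
      have hj : (j : ℕ) < n := j.isLt
      have : (n + 1) - 1 - ((j.succ : Fin (n+1)) : ℕ) = n - 1 - (j : ℕ) := by
        simp [Fin.val_succ]; omega
      rw [this]
    rw [h0, h1]
  have hpos : 0 < m ^ n := Nat.pow_pos (by omega : 0 < m)
  have hmod : (i : ℕ) % m ^ ((n + 1) - 1) = r := by
    simp only [Nat.add_sub_cancel]
    rw [hi', Nat.mul_add_mod, Nat.mod_eq_of_lt hr]
  have hdiv : (i : ℕ) / m ^ ((n + 1) - 1) = x 0 := by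
    simp only [Nat.add_sub_cancel]
    rw [hi', Nat.mul_add_div hpos, Nat.div_eq_of_lt hr, Nat.add_zero]
  rw [hO i, hmod, hdiv]
  -- RHS: split off the last term
  rw [Fin.sum_univ_castSucc]
  have hlast : x ⟨(((Fin.last n : Fin (n+1)) : ℕ) + 1) % (n + 1), Nat.mod_lt _ (by omega)⟩
      * m ^ ((n + 1) - 1 - ((Fin.last n : Fin (n+1)) : ℕ)) = x 0 := by
    have h1 : (((Fin.last n : Fin (n+1)) : ℕ) + 1) % (n + 1) = 0 := by
      simp [Fin.val_last]
    have h2 : (n + 1) - 1 - ((Fin.last n : Fin (n+1)) : ℕ) = 0 := by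
      simp [Fin.val_last]
    rw [h2, pow_zero, Nat.mul_one]
    congr 1
    exact Fin.ext h1
  rw [hlast]
  have hmain : (∑ j : Fin n,
      x ⟨(((j.castSucc : Fin (n+1)) : ℕ) + 1) % (n + 1), Nat.mod_lt _ (by omega)⟩
        * m ^ ((n + 1) - 1 - ((j.castSucc : Fin (n+1)) : ℕ))) = m * r := by
    rw [hr_def, Finset.mul_sum]
    refine Finset.sum_congr rfl fun j _ => ?_
    have hj : (j : ℕ) < n := j.isLt
    have hidx : (⟨(((j.castSucc : Fin (n+1)) : ℕ) + 1) % (n + 1), Nat.mod_lt _ (by omega)⟩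
        : Fin (n+1)) = j.succ := by
      apply Fin.ext
      simp [Fin.val_succ, Nat.mod_eq_of_lt (by omega : (j : ℕ) + 1 < n + 1)]
    rw [hidx]
    have hexp : (n + 1) - 1 - ((j.castSucc : Fin (n+1)) : ℕ) = (n - 1 - (j : ℕ)) + 1 := by
      simp [Fin.coe_castSucc]; omega
    rw [hexp, pow_succ]
    ring
  rw [hmain]
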